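/- Suppose G is a (2,l)-sparse multigraph with a quadrilateral face Q with boundary walk v₁,e₁,v₂,e₂,v₃,e₃,v₄,e₄,v₁, where v₁ ≠ v₃ and e₁ ≠ e₃, and the quadrilateral contraction G_{Q,v₁,v₃} (identify v₁ with v₃, delete e₁ and e₃) is not (2,l)-sparse. Then either (1) there is a subgraph H of G with v₁, v₃ ∈ H, exactly one of v₂, v₄ in H, and γ(H) = l; or (2) there is a subgraph K of G with v₁, v₃ ∈ K, v₂, v₄ ∉ K, and γ(K) = l + 1. -/
import Mathlib


/-- A finite multigraph: each edge is incident to an unordered pair of vertices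
(loops and parallel edges allowed). -/
structure MGraph (V E : Type) where
  inc : E → Sym2 V

namespace MGraph

variable {V E : Type} [DecidableEq V] [DecidableEq E]

/-- A subgraph of a multigraph: a set of vertices and a set of edges whose
endpoints all lie in the vertex set. -/
structure Sub (G : MGraph V E) where
  verts : Finset V
  edges : Finset E
  compat : ∀ e ∈ edges, ∀ v ∈ G.inc e, v ∈ verts

variable {G : MGraph V E}

/-- γ(H) = 2|V(H)| - |E(H)|. -/
def Sub.gamma (H : G.Sub) : ℤ := 2 * H.verts.card - H.edges.card

def Sub.union (H K : G.Sub) : G.Sub where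
  verts := H.verts ∪ K.verts
  edges := H.edges ∪ K.edges
  compat := by
    intro e he v hv
    rcases Finset.mem_union.1 he with h | h
    · exact Finset.mem_union.2 (Or.inl (H.compat e h v hv))
    · exact Finset.mem_union.2 (Or.inr (K.compat e h v hv))

def Sub.inter (H K : G.Sub) : G.Sub where
  verts := H.verts ∩ K.verts
  edges := H.edges ∩ K.edges
  compat := by
    intro e he v hv
    rcases Finset.mem_inter.1 he with ⟨h1, h2⟩
    exact Finset.mem_inter.2 ⟨H.compat e h1 v hv, K.compat e h2 v hv⟩

/-- Subgraph containment. -/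
def Sub.le (H K : G.Sub) : Prop := H.verts ⊆ K.verts ∧ H.edges ⊆ K.edges

/-- H is (2,l)-sparse: every nonempty subgraph K of H has γ(K) ≥ l. -/
def Sparse (l : ℤ) (H : G.Sub) : Prop :=
  ∀ K : G.Sub, K.le H → K.verts.Nonempty → l ≤ K.gamma

/-- H is (2,l)-tight: (2,l)-sparse and γ(H) = l. -/
def Tight (l : ℤ) (H : G.Sub) : Prop := Sparse l H ∧ H.gamma = l

/-- The whole graph, as a subgraph of itself. -/
def top (G : MGraph V E) [Fintype V] [Fintype E] : G.Sub where
  verts := Finset.univ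
  edges := Finset.univ
  compat := fun _ _ v _ => Finset.mem_univ v

/-- Adjacency within a subgraph. -/
def Sub.Adj (H : G.Sub) (u w : V) : Prop := ∃ e ∈ H.edges, G.inc e = s(u, w)

/-- A subgraph is connected if any two of its vertices are joined by a walk in it. -/
def Sub.Connected (H : G.Sub) : Prop :=
  ∀ u ∈ H.verts, ∀ w ∈ H.verts, Relation.ReflTransGen H.Adj u w

/-- The graph obtained from `G` by identifying the vertex `b` with the vertex `a`
and deleting the two edges `f` and `g`. -/
def contractDel (G : MGraph V E) (a b : V) (hab : a ≠ b) (f g : E) :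
    MGraph {v : V // v ≠ b} {e : E // e ≠ f ∧ e ≠ g} where
  inc e := (G.inc e.1).map fun v => if hv : v = b then ⟨a, hab⟩ else ⟨v, hv⟩

/-- Add a single new edge joining `u` and `v`. -/
def addEdge (G : MGraph V E) (u v : V) : MGraph V (Option E) where
  inc := fun e? => e?.elim s(u, v) G.inc

end MGraph

/-- quadrilateral blocker.  `Q` is a quadrilateral face with boundary
walk `v₁,e₁,v₂,e₂,v₃,e₃,v₄,e₄,v₁`, `v₁ ≠ v₃`, `e₁ ≠ e₃`; `G` is (2,l)-sparse, and
the quadrilateral contraction `G_{Q,v₁,v₃}` (identify v₃ with v₁, delete e₁, e₃) is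
not (2,l)-sparse.  Then there is a type 1 blocker (subgraph H with v₁,v₃ ∈ H,
exactly one of v₂,v₄ in H, γ(H) = l) or a type 2 blocker (subgraph K with
v₁,v₃ ∈ K, v₂,v₄ ∉ K, γ(K) = l + 1). -/
theorem quadrilateral_contraction_blocker {V E : Type} [DecidableEq V] [DecidableEq E]
    [Fintype V] [Fintype E] (G : MGraph V E) (l : ℤ) (hl : l ≤ 2)
    (v₁ v₂ v₃ v₄ : V) (e₁ e₂ e₃ e₄ : E) (hv : v₁ ≠ v₃) (he : e₁ ≠ e₃)
    (i1 : G.inc e₁ = s(v₁, v₂)) (i2 : G.inc e₂ = s(v₂, v₃))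
    (i3 : G.inc e₃ = s(v₃, v₄)) (i4 : G.inc e₄ = s(v₄, v₁))
    (hsp : MGraph.Sparse l (MGraph.top G))
    (hns : ¬ MGraph.Sparse l (MGraph.top (G.contractDel v₁ v₃ hv e₁ e₃))) :
    (∃ H : G.Sub, v₁ ∈ H.verts ∧ v₃ ∈ H.verts ∧
      Xor' (v₂ ∈ H.verts) (v₄ ∈ H.verts) ∧ H.gamma = l) ∨
    (∃ K : G.Sub, v₁ ∈ K.verts ∧ v₃ ∈ K.verts ∧
      v₂ ∉ K.verts ∧ v₄ ∉ K.verts ∧ K.gamma = l + 1) := by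
  classical
  rw [MGraph.Sparse] at hns
  push_neg at hns
  obtain ⟨K, -, hKne, hKγ⟩ := hns
  set μ : V → {v : V // v ≠ v₃} := fun v => if h : v = v₃ then ⟨v₁, hv⟩ else ⟨v, h⟩ with hμ
  have hKcompat : ∀ e' ∈ K.edges,
      ∀ w ∈ G.inc (e' : {e : E // e ≠ e₁ ∧ e ≠ e₃}).1, μ w ∈ K.verts := by
    intro e' he' w hw'
    refine K.compat e' he' (μ w) ?_
    show μ w ∈ (G.inc e'.1).map _
    exact Sym2.mem_map.2 ⟨w, hw', rfl⟩
  -- the merged vertex belongs to K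
  have hc : (⟨v₁, hv⟩ : {v : V // v ≠ v₃}) ∈ K.verts := by
    by_contra hc
    have compat0 : ∀ e ∈ K.edges.image Subtype.val, ∀ w ∈ G.inc e,
        w ∈ K.verts.image Subtype.val := by
      intro e heK w hw'
      obtain ⟨e', he', rfl⟩ := Finset.mem_image.1 heK
      have h1 := hKcompat e' he' w hw'
      by_cases hwv : w = v₃
      · exact absurd (by simpa [hμ, hwv] using h1) hc
      · exact Finset.mem_image.2 ⟨⟨w, hwv⟩, by simpa [hμ, hwv] using h1, rfl⟩
    set X₀ : G.Sub := ⟨K.verts.image Subtype.val, K.edges.image Subtype.val, compat0⟩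
    obtain ⟨w, hw⟩ := hKne
    have hX₀ne : X₀.verts.Nonempty := ⟨w.1, Finset.mem_image.2 ⟨w, hw, rfl⟩⟩
    have hspX := hsp X₀ ⟨Finset.subset_univ _, Finset.subset_univ _⟩ hX₀ne
    have hγeq : X₀.gamma = K.gamma := by
      simp [MGraph.Sub.gamma, X₀,
        Finset.card_image_of_injective _ Subtype.val_injective]
    omega
  -- the lifted subgraph X of G
  set Vx : Finset V := insert v₃ (K.verts.image Subtype.val) with hVx
  set Ex : Finset E := K.edges.image Subtype.val with hEx
  have compatX : ∀ e ∈ Ex, ∀ w ∈ G.inc e, w ∈ Vx := by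
    intro e heK w hw'
    obtain ⟨e', he', rfl⟩ := Finset.mem_image.1 heK
    have h1 := hKcompat e' he' w hw'
    by_cases hwv : w = v₃
    · exact Finset.mem_insert.2 (Or.inl hwv)
    · exact Finset.mem_insert_of_mem
        (Finset.mem_image.2 ⟨⟨w, hwv⟩, by simpa [hμ, hwv] using h1, rfl⟩)
  have hv1X : v₁ ∈ Vx :=
    Finset.mem_insert_of_mem (Finset.mem_image.2 ⟨⟨v₁, hv⟩, hc, rfl⟩)
  have hv3X : v₃ ∈ Vx := Finset.mem_insert_self _ _
  have he1X : e₁ ∉ Ex := by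
    intro h
    obtain ⟨e', -, heq⟩ := Finset.mem_image.1 h
    exact e'.2.1 heq
  have he3X : e₃ ∉ Ex := by
    intro h
    obtain ⟨e', -, heq⟩ := Finset.mem_image.1 h
    exact e'.2.2 heq
  have hv3img : v₃ ∉ K.verts.image Subtype.val := by
    intro h
    obtain ⟨w, -, heq⟩ := Finset.mem_image.1 h
    exact w.2 heq
  have hcardV : Vx.card = K.verts.card + 1 := by
    rw [hVx, Finset.card_insert_of_notMem hv3img,
      Finset.card_image_of_injective _ Subtype.val_injective]
  have hcardE : Ex.card = K.edges.card := by
    rw [hEx, Finset.card_image_of_injective _ Subtype.val_injective]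
  have hγKdef : K.gamma = 2 * (K.verts.card : ℤ) - (K.edges.card : ℤ) := rfl
  have hXge : l ≤ 2 * (Vx.card : ℤ) - (Ex.card : ℤ) := by
    have := hsp ⟨Vx, Ex, compatX⟩ ⟨Finset.subset_univ _, Finset.subset_univ _⟩ ⟨v₁, hv1X⟩
    simpa [MGraph.Sub.gamma] using this
  have hXle : 2 * (Vx.card : ℤ) - (Ex.card : ℤ) ≤ l + 1 := by
    rw [hcardV, hcardE]
    push_cast
    omega
  by_cases h2 : v₂ ∈ Vx <;> by_cases h4 : v₄ ∈ Vx
  · -- both v₂ and v₄ in X : add e₁ and e₃, contradiction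
    exfalso
    have compatY : ∀ e ∈ insert e₁ (insert e₃ Ex), ∀ w ∈ G.inc e, w ∈ Vx := by
      intro e heY w hw'
      rcases Finset.mem_insert.1 heY with rfl | heY
      · rw [i1] at hw'
        rcases Sym2.mem_iff.1 hw' with rfl | rfl
        · exact hv1X
        · exact h2
      rcases Finset.mem_insert.1 heY with rfl | heY
      · rw [i3] at hw'
        rcases Sym2.mem_iff.1 hw' with rfl | rfl
        · exact hv3X
        · exact h4
      · exact compatX e heY w hw'
    have hYge : l ≤ 2 * (Vx.card : ℤ) - ((insert e₁ (insert e₃ Ex)).card : ℤ) := by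
      have := hsp ⟨Vx, insert e₁ (insert e₃ Ex), compatY⟩
        ⟨Finset.subset_univ _, Finset.subset_univ _⟩ ⟨v₁, hv1X⟩
      simpa [MGraph.Sub.gamma] using this
    have hcard : (insert e₁ (insert e₃ Ex)).card = Ex.card + 2 := by
      rw [Finset.card_insert_of_notMem (by
        simp only [Finset.mem_insert]
        rintro (h | h)
        · exact he h
        · exact he1X h),
        Finset.card_insert_of_notMem he3X]
    rw [hcard] at hYge
    push_cast at hYge
    omega
  · -- v₂ ∈ X, v₄ ∉ X
    left
    rcases eq_or_lt_of_le hXge with hγ | hγ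
    · exact ⟨⟨Vx, Ex, compatX⟩, hv1X, hv3X, Or.inl ⟨h2, h4⟩, hγ.symm⟩
    · -- γ(X) = l + 1 : add e₁
      have compatY : ∀ e ∈ insert e₁ Ex, ∀ w ∈ G.inc e, w ∈ Vx := by
        intro e heY w hw'
        rcases Finset.mem_insert.1 heY with rfl | heY
        · rw [i1] at hw'
          rcases Sym2.mem_iff.1 hw' with rfl | rfl
          · exact hv1X
          · exact h2
        · exact compatX e heY w hw'
      refine ⟨⟨Vx, insert e₁ Ex, compatY⟩, hv1X, hv3X, Or.inl ⟨h2, h4⟩, ?_⟩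
      show 2 * (Vx.card : ℤ) - ((insert e₁ Ex).card : ℤ) = l
      rw [Finset.card_insert_of_notMem he1X]
      push_cast
      omega
  · -- v₂ ∉ X, v₄ ∈ X
    left
    rcases eq_or_lt_of_le hXge with hγ | hγ
    · exact ⟨⟨Vx, Ex, compatX⟩, hv1X, hv3X, Or.inr ⟨h4, h2⟩, hγ.symm⟩
    · -- γ(X) = l + 1 : add e₃
      have compatY : ∀ e ∈ insert e₃ Ex, ∀ w ∈ G.inc e, w ∈ Vx := by
        intro e heY w hw'
        rcases Finset.mem_insert.1 heY with rfl | heY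
        · rw [i3] at hw'
          rcases Sym2.mem_iff.1 hw' with rfl | rfl
          · exact hv3X
          · exact h4
        · exact compatX e heY w hw'
      refine ⟨⟨Vx, insert e₃ Ex, compatY⟩, hv1X, hv3X, Or.inr ⟨h4, h2⟩, ?_⟩
      show 2 * (Vx.card : ℤ) - ((insert e₃ Ex).card : ℤ) = l
      rw [Finset.card_insert_of_notMem he3X]
      push_cast
      omega
  · -- v₂ ∉ X, v₄ ∉ X
    right
    rcases eq_or_lt_of_le hXge with hγ | hγ
    · -- γ(X) = l : delete one edge to get γ = l + 1
      have h2v : 2 ≤ Vx.card := by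
        have hsub : ({v₁, v₃} : Finset V) ⊆ Vx := by
          intro x hx
          rcases Finset.mem_insert.1 hx with rfl | hx
          · exact hv1X
          · rw [Finset.mem_singleton.1 hx]
            exact hv3X
        calc 2 = ({v₁, v₃} : Finset V).card := (Finset.card_pair hv).symm
          _ ≤ Vx.card := Finset.card_le_card hsub
      have hEpos : 0 < Ex.card := by omega
      obtain ⟨f, hf⟩ := Finset.card_pos.1 hEpos
      have compatY : ∀ e ∈ Ex.erase f, ∀ w ∈ G.inc e, w ∈ Vx := by
        intro e heY w hw'
        exact compatX e (Finset.mem_of_mem_erase heY) w hw'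
      refine ⟨⟨Vx, Ex.erase f, compatY⟩, hv1X, hv3X, h2, h4, ?_⟩
      show 2 * (Vx.card : ℤ) - ((Ex.erase f).card : ℤ) = l + 1
      rw [Finset.card_erase_of_mem hf]
      omega
    · -- γ(X) = l + 1 : X itself is a type 2 blocker
      refine ⟨⟨Vx, Ex, compatX⟩, hv1X, hv3X, h2, h4, ?_⟩
      show 2 * (Vx.card : ℤ) - (Ex.card : ℤ) = l + 1
      omega
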